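/- Let A ⊆ {1,…,d} with complement B, and suppose θ ∈ ℝ^{p̃^d} decomposes as θ = u ⊗_P w for u ∈ ℝ^{p̃^{|A|}}, w ∈ ℝ^{p̃^{|B|}} (tensor product along the partition P = {A,B}, i.e., θ's matricization M_{A,B}(θ) = u w^T). Then for any bipartition {A', B'} with A ⊆ A' (hence B' ⊆ B), the rank of M_{A',B'}(θ) is at most the rank of the matricization of w with respect to the induced partition {A'∖A, B'} of B. In particular, tensoring with a rank-one factor on a block of variables does not increase separation ranks across cuts refining that block. -/

import Mathlib

/-- The matricization of a tensor `θ ∈ ℝ^{p^d}` with respect to the bipartition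
`{A, Aᶜ}` of the legs. -/
def matricize (p d : ℕ) (A : Finset (Fin d)) (θ : (Fin d → Fin p) → ℝ) :
    Matrix (↥A → Fin p) (↥Aᶜ → Fin p) ℝ :=
  fun a b => θ (fun i => if h : i ∈ A then a ⟨i, h⟩ else b ⟨i, Finset.mem_compl.mpr h⟩)

/-- If `θ = u ⊗_P w` along the bipartition `{A, Aᶜ}` (i.e. `θ` is the
rank-one tensor product of `u` on block `A` with `w` on block `Aᶜ`), then for any
bipartition `{A', A'ᶜ}` with `A ⊆ A'`, the rank of the matricization of `θ` with respect
to `{A', A'ᶜ}` is at most the rank of the matricization of `w` with respect to the induced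
partition `{A' \ A, A'ᶜ}` of `Aᶜ`. -/
theorem stmt16 (p d : ℕ) (A A' : Finset (Fin d)) (hAA' : A ⊆ A')
    (u : (↥A → Fin p) → ℝ) (w : (↥Aᶜ → Fin p) → ℝ)
    (θ : (Fin d → Fin p) → ℝ)
    (hθ : ∀ idx : Fin d → Fin p,
      θ idx = u (fun i => idx i) * w (fun i => idx i)) :
    (matricize p d A' θ).rank ≤
      Matrix.rank (fun (a : ↥(A' \ A) → Fin p) (b : ↥A'ᶜ → Fin p) =>
        w (fun i => if h : (i : Fin d) ∈ A' then
            a ⟨i, Finset.mem_sdiff.mpr ⟨h, Finset.mem_compl.mp i.2⟩⟩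
          else b ⟨i, Finset.mem_compl.mpr h⟩)) := by
  classical
  set W : Matrix (↥(A' \ A) → Fin p) (↥A'ᶜ → Fin p) ℝ :=
    fun a b => w (fun i => if h : (i : Fin d) ∈ A' then
        a ⟨i, Finset.mem_sdiff.mpr ⟨h, Finset.mem_compl.mp i.2⟩⟩
      else b ⟨i, Finset.mem_compl.mpr h⟩) with hW
  set P : Matrix (↥A' → Fin p) (↥(A' \ A) → Fin p) ℝ :=
    fun a a' => if a' = (fun j : ↥(A' \ A) => a ⟨j, Finset.sdiff_subset j.2⟩)
      then u (fun i : ↥A => a ⟨i, hAA' i.2⟩) else 0 with hP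
  have hM : matricize p d A' θ = P * W := by
    ext a b
    rw [Matrix.mul_apply]
    simp only [hP]
    rw [Finset.sum_eq_single (fun j : ↥(A' \ A) => a ⟨j, Finset.sdiff_subset j.2⟩)]
    · rw [if_pos rfl]
      show θ _ = _
      rw [hθ]
      congr 1
      · congr 1
        funext i
        have hi : (i : Fin d) ∈ A' := hAA' i.2
        simp [hi]
    · intro b' _ hb'
      rw [if_neg hb', zero_mul]
    · intro h
      exact absurd (Finset.mem_univ _) h
  rw [hM]
  exact Matrix.rank_mul_le_right P W
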